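/- Let 0 < ε < 1 and let h₁, h₂ : B₁(0') → ℝ be C² functions with h₁(0') = h₂(0') = 0, ∇h₁(0') = ∇h₂(0') = 0, C² norms at most γ, and -ε/2 + h₂ < ε/2 + h₁ on B₁(0'). Fix z = (z', z_n) ∈ Ω₁ with |z'| ≤ 1/2 and set R = ε + h₁(z') - h₂(z'). Define ĥ₁(y') = (ε - h₂(z') + h₁(z' + Ry'))/R and ĥ₂(y') = (-h₂(z') + h₂(z' + Ry'))/R for |y'| ≤ 1. Then ĥ₁(0') = 1, ĥ₂(0') = 0, ĥ₂ < ĥ₁ on its domain, and for each l ≥ 1 there is a constant C_l depending only on l and γ (not on ε or z) with |∇^l ĥ₁(y')|, |∇^l ĥ₂(y')| ≤ C_l for |y'| ≤ 1, provided h₁, h₂ ∈ C^{l}. -/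

import Mathlib

open ContinuousLinearMap

lemma my_iteratedFDeriv_comp_const_add {E F : Type*} [NormedAddCommGroup E] [NormedSpace ℝ E]
    [NormedAddCommGroup F] [NormedSpace ℝ F] {n : WithTop ℕ∞} {f : E → F} (hf : ContDiff ℝ n f) (z : E) :
    ∀ i : ℕ, (i : WithTop ℕ∞) ≤ n →
      iteratedFDeriv ℝ i (fun x => f (z + x)) = fun y => iteratedFDeriv ℝ i f (z + y) := by
  intro i
  induction i with
  | zero =>
    intro _
    funext y
    ext v
    simp
  | succ i ih =>
    intro hin
    have hi : (i : WithTop ℕ∞) ≤ n := le_trans (by exact_mod_cast Nat.le_succ i) hin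
    funext y
    rw [iteratedFDeriv_succ_eq_comp_left, iteratedFDeriv_succ_eq_comp_left]
    simp only [Function.comp_apply]
    congr 1
    rw [ih hi]
    have hdiff : DifferentiableAt ℝ (iteratedFDeriv ℝ i f) (z + y) :=
      (hf.differentiable_iteratedFDeriv
        (lt_of_lt_of_le (by exact_mod_cast Nat.lt_succ_self i : (i:WithTop ℕ∞) < ((i+1:ℕ):WithTop ℕ∞)) hin)) _
    have h1 : HasFDerivAt (fun w : E => z + w) (ContinuousLinearMap.id ℝ E) y :=
      (hasFDerivAt_id y).const_add z
    have h2 := (hdiff.hasFDerivAt.comp y h1).fderiv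
    rw [ContinuousLinearMap.comp_id] at h2
    exact h2

lemma my_deriv_bound {E : Type*} [NormedAddCommGroup E] [NormedSpace ℝ E]
    (f : E → ℝ) {l : ℕ} (hf : ContDiff ℝ (l : WithTop ℕ∞) f) (c R : ℝ) (hR : 0 < R) (z : E)
    {i : ℕ} (hi1 : 1 ≤ i) (hil : i ≤ l) (y : E) :
    ‖iteratedFDeriv ℝ i (fun y => (c + f (z + R • y)) / R) y‖ ≤
      ‖iteratedFDeriv ℝ i f (z + R • y)‖ * R ^ (i - 1) := by
  set L : E →L[ℝ] E := R • ContinuousLinearMap.id ℝ E with hL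
  have hLapp : ∀ w : E, L w = R • w := fun w => rfl
  set f₂ : E → ℝ := fun x => c + f (z + x) with hf₂def
  have hf₂ : ContDiff ℝ (l : WithTop ℕ∞) f₂ :=
    contDiff_const.add (hf.comp (contDiff_const.add contDiff_id))
  have hgeq : (fun y => (c + f (z + R • y)) / R) = fun y => R⁻¹ • (f₂ ∘ L) y := by
    funext w
    simp [hf₂def, hLapp, div_eq_inv_mul, smul_eq_mul]
  rw [hgeq]
  have hcomp : ContDiff ℝ (i : WithTop ℕ∞) (f₂ ∘ L) :=
    (hf₂.comp L.contDiff).of_le (by exact_mod_cast hil)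
  rw [iteratedFDeriv_const_smul_apply' hcomp.contDiffAt]
  rw [L.iteratedFDeriv_comp_right hf₂ y (by exact_mod_cast hil)]
  have hLnorm : ‖L‖ ≤ R := by
    calc ‖L‖ = |R| * ‖ContinuousLinearMap.id ℝ E‖ := by
          rw [hL, norm_smul R (ContinuousLinearMap.id ℝ E), Real.norm_eq_abs]
    _ ≤ |R| * 1 :=
        mul_le_mul_of_nonneg_left (ContinuousLinearMap.norm_id_le) (abs_nonneg R)
    _ = R := by rw [mul_one, abs_of_pos hR]
  have hcompnorm :
      ‖(iteratedFDeriv ℝ i f₂ (L y)).compContinuousLinearMap fun _ => L‖ ≤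
        ‖iteratedFDeriv ℝ i f₂ (L y)‖ * R ^ i := by
    refine le_trans (ContinuousMultilinearMap.norm_compContinuousLinearMap_le _ _) ?_
    gcongr
    calc ∏ _j : Fin i, ‖L‖ ≤ ∏ _j : Fin i, R := by
          exact Finset.prod_le_prod (fun _ _ => norm_nonneg _) (fun _ _ => hLnorm)
    _ = R ^ i := by simp [Finset.prod_const]
  have hf₂deriv : iteratedFDeriv ℝ i f₂ (L y) = iteratedFDeriv ℝ i f (z + L y) := by
    have h1 : iteratedFDeriv ℝ i f₂ (L y) =
        iteratedFDeriv ℝ i (fun _ => c) (L y) +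
          iteratedFDeriv ℝ i (fun x => f (z + x)) (L y) := by
      exact iteratedFDeriv_add_apply' contDiff_const.contDiffAt
        (((hf.comp (contDiff_const.add contDiff_id)).of_le (by exact_mod_cast hil) :
          ContDiff ℝ (i : WithTop ℕ∞) (fun x => f (z + x))).contDiffAt)
    rw [h1, iteratedFDeriv_const_of_ne (by omega),
      my_iteratedFDeriv_comp_const_add hf z i (by exact_mod_cast hil)]
    simp
  rw [norm_smul R⁻¹ ((iteratedFDeriv ℝ i f₂ (L y)).compContinuousLinearMap fun _ => L)]
  have hpow : R⁻¹ * R ^ i = R ^ (i - 1) := by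
    have h' : i = (i - 1) + 1 := by omega
    rw [h', pow_succ]
    field_simp
    simp
  calc ‖R⁻¹‖ * ‖(iteratedFDeriv ℝ i f₂ (L y)).compContinuousLinearMap fun _ => L‖
      ≤ ‖R⁻¹‖ * (‖iteratedFDeriv ℝ i f₂ (L y)‖ * R ^ i) :=
        mul_le_mul_of_nonneg_left hcompnorm (norm_nonneg _)
    _ = ‖iteratedFDeriv ℝ i f (z + R • y)‖ * (R⁻¹ * R ^ i) := by
        rw [hf₂deriv, hLapp, Real.norm_eq_abs, abs_of_pos (inv_pos.mpr hR)]; ring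
    _ = ‖iteratedFDeriv ℝ i f (z + R • y)‖ * R ^ (i - 1) := by rw [hpow]

/-- rescaling lemma: with `R = ε + h₁(z') - h₂(z')` and the
rescaled graphs `hh₁(y') = (ε - h₂(z') + h₁(z'+Ry'))/R`,
`hh₂(y') = (-h₂(z') + h₂(z'+Ry'))/R`, one has `hh₁(0') = 1`, `hh₂(0') = 0`,
`hh₂ < hh₁`, and all derivatives of order `1 ≤ i ≤ l` are bounded on the unit
ball by a constant depending only on `l` and `γ` (not on `ε` or `z`). -/
theorem stmt_15 (m l : ℕ) (hm : 1 ≤ m) (hl : 1 ≤ l) (γ : ℝ) (hγ : 0 < γ) :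
    ∃ Cl : ℝ, 0 < Cl ∧
      ∀ ε : ℝ, 0 < ε → ε < 1 →
      ∀ h₁ h₂ : EuclideanSpace ℝ (Fin m) → ℝ,
        ContDiff ℝ l h₁ → ContDiff ℝ l h₂ →
        h₁ 0 = 0 → h₂ 0 = 0 → fderiv ℝ h₁ 0 = 0 → fderiv ℝ h₂ 0 = 0 →
        (∀ x' : EuclideanSpace ℝ (Fin m), ‖x'‖ ≤ 1 →
          ∀ i ≤ l, ‖iteratedFDeriv ℝ i h₁ x'‖ ≤ γ ∧ ‖iteratedFDeriv ℝ i h₂ x'‖ ≤ γ) →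
        (∀ x' : EuclideanSpace ℝ (Fin m), ‖x'‖ ≤ 1 →
          -ε / 2 + h₂ x' < ε / 2 + h₁ x') →
      ∀ z' : EuclideanSpace ℝ (Fin m), ‖z'‖ ≤ 1 / 2 →
      ∀ R : ℝ, R = ε + h₁ z' - h₂ z' →
      (∀ y' : EuclideanSpace ℝ (Fin m), ‖y'‖ ≤ 1 → ‖z' + R • y'‖ ≤ 1) →
      ∀ hh₁ hh₂ : EuclideanSpace ℝ (Fin m) → ℝ,
        hh₁ = (fun y' => (ε - h₂ z' + h₁ (z' + R • y')) / R) →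
        hh₂ = (fun y' => (-h₂ z' + h₂ (z' + R • y')) / R) →
        hh₁ 0 = 1 ∧ hh₂ 0 = 0 ∧
          (∀ y' : EuclideanSpace ℝ (Fin m), ‖y'‖ ≤ 1 → hh₂ y' < hh₁ y') ∧
          (∀ y' : EuclideanSpace ℝ (Fin m), ‖y'‖ ≤ 1 → ∀ i, 1 ≤ i → i ≤ l →
            ‖iteratedFDeriv ℝ i hh₁ y'‖ ≤ Cl ∧ ‖iteratedFDeriv ℝ i hh₂ y'‖ ≤ Cl) := by
  refine ⟨γ * (1 + γ) ^ l, by positivity, ?_⟩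
  intro ε hε0 hε1 h₁ h₂ hcd₁ hcd₂ h10 h20 hd1 hd2 hbound hgap z' hz' R hRdef hin hh₁ hh₂
    hh1def hh2def
  have hz1 : ‖z'‖ ≤ 1 := by linarith
  have hRpos : 0 < R := by
    have := hgap z' hz1
    rw [hRdef]; linarith
  -- mean value bound on |h z'|
  have hmv : ∀ h : EuclideanSpace ℝ (Fin m) → ℝ, ContDiff ℝ (l : WithTop ℕ∞) h → h 0 = 0 →
      (∀ x', ‖x'‖ ≤ 1 → ‖iteratedFDeriv ℝ 1 h x'‖ ≤ γ) → |h z'| ≤ γ / 2 := by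
    intro h hcd h0 hb
    have hfd : ∀ x', ‖x'‖ ≤ 1 → ‖fderiv ℝ h x'‖ ≤ γ := by
      intro x' hx'
      have : ‖fderiv ℝ h x'‖ = ‖iteratedFDeriv ℝ 1 h x'‖ := by
        rw [← norm_iteratedFDeriv_fderiv (n := 0), norm_iteratedFDeriv_zero]
      rw [this]; exact hb x' hx'
    have hdiff : Differentiable ℝ h := hcd.differentiable (by exact_mod_cast (show l ≠ 0 by omega))
    have := (convex_closedBall (0 : EuclideanSpace ℝ (Fin m)) 1).norm_image_sub_le_of_norm_fderiv_le
      (fun x _ => hdiff.differentiableAt)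
      (fun x hx => hfd x (by simpa [Metric.mem_closedBall, dist_eq_norm] using hx))
      (x := 0) (y := z')
      (Metric.mem_closedBall.mpr (by simp))
      (Metric.mem_closedBall.mpr (by simpa [dist_eq_norm] using hz1))
    rw [h0, sub_zero, Real.norm_eq_abs, sub_zero] at this
    calc |h z'| ≤ γ * ‖z'‖ := this
      _ ≤ γ * (1 / 2) := mul_le_mul_of_nonneg_left hz' hγ.le
      _ = γ / 2 := by ring
  have hb1 : |h₁ z'| ≤ γ / 2 :=
    hmv h₁ hcd₁ h10 (fun x' hx' => (hbound x' hx' 1 hl).1)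
  have hb2 : |h₂ z'| ≤ γ / 2 :=
    hmv h₂ hcd₂ h20 (fun x' hx' => (hbound x' hx' 1 hl).2)
  have hRle : R ≤ 1 + γ := by
    rw [hRdef]
    have := abs_le.mp hb1
    have := abs_le.mp hb2
    linarith
  refine ⟨?_, ?_, ?_, ?_⟩
  · rw [hh1def]
    simp only [smul_zero, add_zero]
    have : ε - h₂ z' + h₁ z' = R := by rw [hRdef]; ring
    rw [this, div_self hRpos.ne']
  · rw [hh2def]
    simp only [smul_zero, add_zero]
    simp
  · intro y' hy'
    rw [hh1def, hh2def]
    have hgapx := hgap (z' + R • y') (hin y' hy')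
    rw [div_lt_div_iff₀ hRpos hRpos]
    nlinarith
  · intro y' hy' i hi1 hil
    have hx := hin y' hy'
    have hp : R ^ (i - 1) ≤ (1 + γ) ^ l := by
      calc R ^ (i - 1) ≤ (1 + γ) ^ (i - 1) := pow_le_pow_left₀ hRpos.le hRle _
        _ ≤ (1 + γ) ^ l := pow_le_pow_right₀ (by linarith) (by omega)
    constructor
    · rw [hh1def]
      refine le_trans (my_deriv_bound h₁ hcd₁ (ε - h₂ z') R hRpos z' hi1 hil y') ?_
      exact mul_le_mul ((hbound _ hx i hil).1) hp (pow_nonneg hRpos.le _) hγ.le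
    · rw [hh2def]
      refine le_trans (my_deriv_bound h₂ hcd₂ (-h₂ z') R hRpos z' hi1 hil y') ?_
      exact mul_le_mul ((hbound _ hx i hil).2) hp (pow_nonneg hRpos.le _) hγ.le
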